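/- For every positive integer n and every integer k ≥ 2, there exists a divisor d of n with d ≤ n^{1/k} and τ(n) ≤ 2^{k^2} · τ(d)^{k^3}. -/

import Mathlib

open Finset ArithmeticFunction

lemma dbg_prod_range_mod {M : Type*} [CommMonoid M] (f : ℕ → M) (t k : ℕ) :
    ∏ i ∈ Finset.range (t * k), f (i % t) = (∏ i ∈ Finset.range t, f i) ^ k := by
  induction k with
  | zero => simp
  | succ k ih =>
    rw [Nat.mul_succ, Finset.prod_range_add, ih, pow_succ]
    congr 1
    refine Finset.prod_congr rfl fun i hi => ?_
    rw [Finset.mem_range] at hi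
    rw [Nat.add_comm, Nat.add_mul_mod_self_left, Nat.mod_eq_of_lt hi]

lemma dbg_take_prod_eq (l : List ℕ) (m : ℕ) (hm : m ≤ l.length) :
    (l.take m).prod = ∏ i ∈ Finset.range m, l.getD i 1 := by
  induction m with
  | zero => simp
  | succ m ih =>
    have hlt : m < l.length := lt_of_lt_of_le (Nat.lt_succ_self m) hm
    rw [Finset.prod_range_succ, ← ih hlt.le, List.prod_take_succ _ _ hlt,
      List.getD_eq_getElem _ _ hlt]

lemma dbg_take_pow_le (l : List ℕ) (hs : l.Pairwise (· ≤ ·))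
    (hpos : ∀ x ∈ l, 0 < x) (t k : ℕ) (hk : 0 < k) (h : t * k ≤ l.length) :
    (l.take t).prod ^ k ≤ l.prod := by
  have htl : t ≤ l.length := le_trans (Nat.le_mul_of_pos_right t hk) h
  have key : (l.take t).prod ^ k ≤ (l.take (t * k)).prod := by
    rw [dbg_take_prod_eq l t htl, dbg_take_prod_eq l (t * k) h, ← dbg_prod_range_mod]
    refine Finset.prod_le_prod' fun i hi => ?_
    rw [Finset.mem_range] at hi
    rcases Nat.eq_zero_or_pos t with rfl | ht
    · simp at hi
    have h1 : i % t < l.length := lt_of_lt_of_le (Nat.mod_lt i ht) htl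
    have h2 : i < l.length := lt_of_lt_of_le hi h
    rw [List.getD_eq_getElem _ _ h1, List.getD_eq_getElem _ _ h2]
    exact List.Pairwise.rel_get_of_le hs (show (⟨i % t, h1⟩ : Fin l.length) ≤ ⟨i, h2⟩ from
      Nat.mod_le i t)
  refine key.trans ?_
  have hdpos : 0 < (l.drop (t * k)).prod :=
    List.prod_pos fun a ha => hpos a (List.mem_of_mem_drop ha)
  calc (l.take (t * k)).prod ≤ (l.take (t * k)).prod * (l.drop (t * k)).prod :=
        Nat.le_mul_of_pos_right _ hdpos
    _ = l.prod := by rw [← List.prod_append, List.take_append_drop]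

/-- For every positive integer `n` and `k ≥ 2` there is a divisor `d ∣ n` with
`d ≤ n^(1/k)` and `τ(n) ≤ 2^(k^2) · τ(d)^(k^3)`. -/
theorem divisor_bound_general (n : ℕ) (hn : 0 < n) (k : ℕ) (hk : 2 ≤ k) :
    ∃ d : ℕ, d ∣ n ∧ (d : ℝ) ≤ (n : ℝ) ^ ((1 : ℝ) / k) ∧
      n.divisors.card ≤ 2 ^ (k ^ 2) * d.divisors.card ^ (k ^ 3) := by
  have hk0 : 0 < k := by omega
  set s := n.primeFactors with hs
  set e : ℕ → ℕ := fun p => n.factorization p with he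
  set r := s.card with hr
  set t := r / k with htdef
  set d₀ := ∏ p ∈ s, p ^ (e p / k) with hd₀
  set l := s.sort (· ≤ ·) with hl
  set d₁ := (l.take t).prod with hd₁
  have hprodn : ∏ p ∈ s, p ^ e p = n := by
    conv_rhs => rw [← Nat.factorization_prod_pow_eq_self hn.ne']
    rfl
  -- divisibility of d₀
  have hd₀k : d₀ ^ k ∣ n := by
    rw [← hprodn, hd₀, ← Finset.prod_pow]
    refine Finset.prod_dvd_prod_of_dvd _ _ fun p hp => ?_
    rw [← pow_mul]
    exact pow_dvd_pow p (Nat.div_mul_le_self _ _)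
  have hd₀n : d₀ ∣ n := (dvd_pow_self d₀ hk0.ne').trans hd₀k
  -- real bound helper
  have hle_rpow : ∀ d : ℕ, d ^ k ≤ n → (d : ℝ) ≤ (n : ℝ) ^ ((1 : ℝ) / k) := by
    intro d hdk
    have h1 : ((d : ℝ)) ^ (k : ℕ) ≤ (n : ℝ) := by exact_mod_cast hdk
    have h2 : (((d : ℝ)) ^ (k : ℕ)) ^ ((1 : ℝ) / k) ≤ (n : ℝ) ^ ((1 : ℝ) / k) :=
      Real.rpow_le_rpow (by positivity) h1 (by positivity)
    have hkne : (k : ℝ) ≠ 0 := by positivity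
    rwa [← Real.rpow_natCast (d : ℝ) k, ← Real.rpow_mul (Nat.cast_nonneg d),
      mul_one_div, div_self hkne, Real.rpow_one] at h2
  -- τ computations
  have hτn : n.divisors.card = ∏ p ∈ s, (e p + 1) := by
    rw [Nat.card_divisors hn.ne']
  have hτ0 : d₀.divisors.card = ∏ p ∈ s, (e p / k + 1) := by
    rw [← sigma_zero_apply, hd₀, IsMultiplicative.map_prod _ isMultiplicative_sigma s
      (fun p hp q hq hpq => Nat.Coprime.pow _ _ ((Nat.coprime_primes
        (Nat.prime_of_mem_primeFactors hp) (Nat.prime_of_mem_primeFactors hq)).mpr hpq))]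
    exact Finset.prod_congr rfl fun p hp =>
      sigma_zero_apply_prime_pow (Nat.prime_of_mem_primeFactors hp)
  -- d₁ facts
  have hnodup : (l.take t).Nodup := (Finset.sort_nodup s _).sublist (List.take_sublist _ _)
  set T := (l.take t).toFinset with hT
  have hTsub : T ⊆ s := by
    intro p hp
    rw [hT, List.mem_toFinset] at hp
    have := List.take_subset t l hp
    rwa [hl, Finset.mem_sort] at this
  have hd₁T : ∏ p ∈ T, p = d₁ := by
    rw [hT, List.prod_toFinset _ hnodup, List.map_id']
  have hlen : l.length = r := Finset.length_sort _
  have htr : t ≤ r := Nat.div_le_self _ _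
  have hTcard : T.card = t := by
    rw [hT, List.toFinset_card_of_nodup hnodup, List.length_take, hlen]
    exact Nat.min_eq_left htr
  have hτ1 : d₁.divisors.card = 2 ^ t := by
    rw [← hd₁T, ← sigma_zero_apply,
      IsMultiplicative.map_prod_of_subset_primeFactors isMultiplicative_sigma n T hTsub]
    rw [Finset.prod_congr rfl fun p hp => show sigma 0 p = 2 by
      simpa using sigma_zero_apply_prime_pow (i := 1)
        (Nat.prime_of_mem_primeFactors (hTsub hp)), Finset.prod_const, hTcard]
  have hd₁n : d₁ ∣ n := by
    rw [← hd₁T]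
    exact (Finset.prod_dvd_prod_of_subset T s (fun p => p) hTsub).trans
      (Nat.prod_primeFactors_dvd n)
  have hd₁k : d₁ ^ k ≤ n := by
    have hpos : ∀ x ∈ l, 0 < x := fun x hx =>
      (Nat.prime_of_mem_primeFactors (by rwa [hl, Finset.mem_sort] at hx)).pos
    have h1 := dbg_take_pow_le l (Finset.pairwise_sort _ _) hpos t k hk0
      (by rw [hlen]; exact Nat.div_mul_le_self r k)
    have h2 : l.prod = ∏ p ∈ s, p := by
      conv_rhs => rw [← Finset.sort_toFinset s (· ≤ ·), ← hl]
      rw [List.prod_toFinset _ (Finset.sort_nodup s _), List.map_id']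
    refine h1.trans ?_
    rw [h2]
    exact Nat.le_of_dvd hn (Nat.prod_primeFactors_dvd n)
  -- main counting chain
  have main : n.divisors.card ≤ k ^ r * d₀.divisors.card := by
    rw [hτn, hτ0]
    calc ∏ p ∈ s, (e p + 1) ≤ ∏ p ∈ s, (k * (e p / k + 1)) := by
          refine Finset.prod_le_prod' fun p _ => ?_
          have h1 := Nat.div_add_mod (e p) k
          have h2 := Nat.mod_lt (e p) hk0
          have h3 : k * (e p / k + 1) = k * (e p / k) + k := by ring
          omega
      _ = k ^ r * ∏ p ∈ s, (e p / k + 1) := by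
          rw [Finset.prod_mul_distrib, Finset.prod_const, hr]
  have hpow : k ^ r ≤ 2 ^ (k ^ 2) * (2 ^ t) ^ (k ^ 2) := by
    have hrle : r ≤ k * t + k := by
      have h1 := Nat.div_add_mod r k
      have h2 := Nat.mod_lt r hk0
      have h3 : k * t = k * (r / k) := by rw [htdef]
      omega
    calc k ^ r ≤ (2 ^ k) ^ r := Nat.pow_le_pow_left (Nat.lt_two_pow_self (n := k)).le r
      _ = 2 ^ (k * r) := by rw [← pow_mul]
      _ ≤ 2 ^ (k * (k * t + k)) := Nat.pow_le_pow_right (by norm_num)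
          (Nat.mul_le_mul_left k hrle)
      _ = 2 ^ (k ^ 2) * (2 ^ t) ^ (k ^ 2) := by ring
  have hcomb : n.divisors.card ≤ 2 ^ (k ^ 2) * d₁.divisors.card ^ (k ^ 2) * d₀.divisors.card := by
    refine main.trans ?_
    rw [hτ1]
    exact Nat.mul_le_mul_right _ hpow
  have hexp : k ^ 2 + 1 ≤ k ^ 3 := by nlinarith
  by_cases hc : d₀.divisors.card ≤ d₁.divisors.card
  · refine ⟨d₁, hd₁n, hle_rpow d₁ hd₁k, ?_⟩
    have h1pos : 1 ≤ d₁.divisors.card := by rw [hτ1]; exact Nat.one_le_two_pow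
    calc n.divisors.card ≤ 2 ^ (k ^ 2) * d₁.divisors.card ^ (k ^ 2) * d₀.divisors.card :=
          hcomb
      _ ≤ 2 ^ (k ^ 2) * d₁.divisors.card ^ (k ^ 2) * d₁.divisors.card :=
          Nat.mul_le_mul_left _ hc
      _ = 2 ^ (k ^ 2) * d₁.divisors.card ^ (k ^ 2 + 1) := by ring
      _ ≤ 2 ^ (k ^ 2) * d₁.divisors.card ^ (k ^ 3) :=
          Nat.mul_le_mul_left _ (Nat.pow_le_pow_right h1pos hexp)
  · push_neg at hc
    refine ⟨d₀, hd₀n, hle_rpow d₀ (Nat.le_of_dvd hn hd₀k), ?_⟩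
    have h0pos : 1 ≤ d₀.divisors.card := by
      have hd₀ne : d₀ ≠ 0 := by
        rintro h
        rw [h] at hd₀n
        exact hn.ne' (Nat.eq_zero_of_zero_dvd hd₀n)
      exact Finset.card_pos.mpr ⟨1, Nat.one_mem_divisors.mpr hd₀ne⟩
    calc n.divisors.card ≤ 2 ^ (k ^ 2) * d₁.divisors.card ^ (k ^ 2) * d₀.divisors.card :=
          hcomb
      _ ≤ 2 ^ (k ^ 2) * d₀.divisors.card ^ (k ^ 2) * d₀.divisors.card :=
          Nat.mul_le_mul_right _ (Nat.mul_le_mul_left _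
            (Nat.pow_le_pow_left hc.le _))
      _ = 2 ^ (k ^ 2) * d₀.divisors.card ^ (k ^ 2 + 1) := by ring
      _ ≤ 2 ^ (k ^ 2) * d₀.divisors.card ^ (k ^ 3) :=
          Nat.mul_le_mul_left _ (Nat.pow_le_pow_right h0pos hexp)
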